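/- In ℝ³, let S be the cone {(x,y,z) : x² + y² = k²z²} with k > 0, and let ρ be the plane z = m·y + h with h ≠ 0 and m·k > 1. Then for every point P in S ∩ ρ there exist fixed points F₁, F₂ ∈ ρ and a constant d > 0 (depending only on S and ρ) with ||P - F₁| - |P - F₂|| = d, i.e., the section is (contained in) a hyperbola. -/

import Mathlib

set_option maxHeartbeats 1000000
/-- Dandelin: the section of the cone `x² + y² = k²z²` by the plane `z = m·y + h`
(`h ≠ 0`, `m·k > 1`) is contained in a hyperbola: there are two points `F₁`, `F₂` in
the plane and a constant `d > 0` such that every point of the section has absolute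
difference of distances `d` to `F₁` and `F₂`. -/
theorem cone_section_hyperbola (k m h : ℝ) (hk : 0 < k) (hh : h ≠ 0)
    (hmk : m * k > 1) :
    ∃ (F₁ F₂ : EuclideanSpace ℝ (Fin 3)) (d : ℝ), 0 < d ∧
      F₁ 2 = m * F₁ 1 + h ∧ F₂ 2 = m * F₂ 1 + h ∧
      ∀ P : EuclideanSpace ℝ (Fin 3),
        (P 0) ^ 2 + (P 1) ^ 2 = k ^ 2 * (P 2) ^ 2 → P 2 = m * P 1 + h →
        |dist P F₁ - dist P F₂| = d := by
  have hm : 0 < m := by nlinarith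
  have habs : 0 < |h| := abs_pos.mpr hh
  set q : ℝ := k ^ 2 * m ^ 2 - 1 with hqdef
  have hq0 : 0 < q := by nlinarith
  have hqne : q ≠ 0 := ne_of_gt hq0
  set g : ℝ := m * Real.sqrt (1 + k ^ 2) with hgdef
  have hg2 : g ^ 2 = m ^ 2 * (1 + k ^ 2) := by
    rw [hgdef, mul_pow, Real.sq_sqrt (by positivity)]
  have hgpos : 0 < g := by
    rw [hgdef]; positivity
  set a : ℝ := k * |h| * Real.sqrt (1 + m ^ 2) / q with hadef
  have hapos : 0 < a := by rw [hadef]; positivity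
  have ha2' : a ^ 2 * q ^ 2 = k ^ 2 * h ^ 2 * (1 + m ^ 2) := by
    rw [hadef, div_pow, mul_pow, mul_pow, sq_abs, Real.sq_sqrt (by positivity)]
    field_simp
  set y₀ : ℝ := -(k ^ 2 * m * h) / q with hy₀def
  have hy₀q : y₀ * q = -(k ^ 2 * m * h) := by
    rw [hy₀def]; field_simp
  set c' : ℝ := g * a / (1 + m ^ 2) with hc'def
  have hm2 : (0:ℝ) < 1 + m ^ 2 := by positivity
  have hcc : (1 + m ^ 2) * c' = g * a := by
    rw [hc'def]; field_simp
  have hMne : q ^ 2 * (1 + m ^ 2) ≠ 0 := by positivity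
  refine ⟨!₂[0, y₀ + c', m * (y₀ + c') + h], !₂[0, y₀ - c', m * (y₀ - c') + h], 2 * a,
    by linarith, by simp, by simp, ?_⟩
  intro P hcone hplane
  -- the cone equation in terms of s = P 1 - y₀
  have h1 : (P 0) ^ 2 = k ^ 2 * (m * P 1 + h) ^ 2 - (P 1) ^ 2 := by
    rw [← hplane]; linarith [hcone]
  have hx2' : (P 0) ^ 2 * q = (q * P 1 + k ^ 2 * m * h) ^ 2 - k ^ 2 * h ^ 2 := by
    linear_combination q * h1 + (k ^ 2 * h ^ 2 - q * (P 1) ^ 2) * hqdef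
  have hx2'' : (P 0) ^ 2 * q = q ^ 2 * (P 1 - y₀) ^ 2 - k ^ 2 * h ^ 2 := by
    linear_combination hx2' + (2 * q * (P 1) + k ^ 2 * m * h - q * y₀) * hy₀q
  -- the two focal distances
  have hd1 : dist P (!₂[0, y₀ + c', m * (y₀ + c') + h] : EuclideanSpace ℝ (Fin 3)) =
      |g * (P 1 - y₀) - a| := by
    rw [EuclideanSpace.dist_eq, ← Real.sqrt_sq_eq_abs]
    congr 1
    rw [Fin.sum_univ_three]
    simp only [Real.dist_eq, sq_abs, WithLp.ofLp_toLp, Matrix.cons_val_zero, Matrix.cons_val_one,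
      Matrix.head_cons, Matrix.cons_val_two, Matrix.tail_cons]
    rw [hplane]
    apply mul_right_cancel₀ hMne
    linear_combination (q * (1 + m ^ 2)) * hx2'' +
      (q ^ 2 * (a ^ 2 - (1 + m ^ 2) * (P 1 - y₀) ^ 2)) * hg2 +
      (q ^ 2 * ((1 + m ^ 2) * (c' - 2 * (P 1 - y₀)) + g * a)) * hcc +
      (k ^ 2 * m ^ 2 - 1) * ha2' +
      ((1 + m ^ 2) * (q ^ 2 * (P 1 - y₀) ^ 2 - k ^ 2 * h ^ 2)) * hqdef
  have hd2 : dist P (!₂[0, y₀ - c', m * (y₀ - c') + h] : EuclideanSpace ℝ (Fin 3)) =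
      |g * (P 1 - y₀) + a| := by
    rw [EuclideanSpace.dist_eq, ← Real.sqrt_sq_eq_abs]
    congr 1
    rw [Fin.sum_univ_three]
    simp only [Real.dist_eq, sq_abs, WithLp.ofLp_toLp, Matrix.cons_val_zero, Matrix.cons_val_one,
      Matrix.head_cons, Matrix.cons_val_two, Matrix.tail_cons]
    rw [hplane]
    apply mul_right_cancel₀ hMne
    linear_combination (q * (1 + m ^ 2)) * hx2'' +
      (q ^ 2 * (a ^ 2 - (1 + m ^ 2) * (P 1 - y₀) ^ 2)) * hg2 +
      (q ^ 2 * ((1 + m ^ 2) * (c' + 2 * (P 1 - y₀)) + g * a)) * hcc +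
      (k ^ 2 * m ^ 2 - 1) * ha2' +
      ((1 + m ^ 2) * (q ^ 2 * (P 1 - y₀) ^ 2 - k ^ 2 * h ^ 2)) * hqdef
  -- the branch inequality : a < |g (P 1 - y₀)|
  have hs2 : q ^ 2 * (P 1 - y₀) ^ 2 ≥ k ^ 2 * h ^ 2 := by
    nlinarith [sq_nonneg (P 0), hx2'']
  have hineq : a < |g * (P 1 - y₀)| := by
    have hgsub : (g * (P 1 - y₀)) ^ 2 * q ^ 2 =
        m ^ 2 * (1 + k ^ 2) * (q ^ 2 * (P 1 - y₀) ^ 2) := by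
      linear_combination (q ^ 2 * (P 1 - y₀) ^ 2) * hg2
    have hh2 : (0:ℝ) < k ^ 2 * h ^ 2 := by positivity
    have hint1 : m ^ 2 * (1 + k ^ 2) * (q ^ 2 * (P 1 - y₀) ^ 2) ≥
        m ^ 2 * (1 + k ^ 2) * (k ^ 2 * h ^ 2) :=
      mul_le_mul_of_nonneg_left hs2 (by positivity)
    have hq0' : (0:ℝ) < k ^ 2 * m ^ 2 - 1 := by rw [← hqdef]; exact hq0
    have hqq : a ^ 2 * q ^ 2 < (g * (P 1 - y₀)) ^ 2 * q ^ 2 := by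
      rw [hgsub, ha2']
      refine lt_of_lt_of_le ?_ hint1
      nlinarith [mul_pos hh2 hq0']
    have h2 : a ^ 2 < |g * (P 1 - y₀)| ^ 2 := by
      rw [sq_abs]
      exact lt_of_mul_lt_mul_right hqq (sq_nonneg q)
    exact lt_of_pow_lt_pow_left₀ 2 (abs_nonneg _) h2
  -- conclude
  rw [hd1, hd2]
  rcases lt_abs.mp hineq with h4 | h4
  · rw [abs_of_nonneg (by linarith : (0:ℝ) ≤ g * (P 1 - y₀) - a),
      abs_of_nonneg (by linarith : (0:ℝ) ≤ g * (P 1 - y₀) + a),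
      show g * (P 1 - y₀) - a - (g * (P 1 - y₀) + a) = -(2 * a) by ring, abs_neg,
      abs_of_pos (by linarith)]
  · rw [abs_of_nonpos (by linarith : g * (P 1 - y₀) - a ≤ 0),
      abs_of_nonpos (by linarith : g * (P 1 - y₀) + a ≤ 0),
      show -(g * (P 1 - y₀) - a) - -(g * (P 1 - y₀) + a) = 2 * a by ring,
      abs_of_pos (by linarith)]
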